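/- Let \(\mathcal{A}=(Q,\Sigma,\delta)\) be a deterministic finite automaton with \(n=|Q|\) states, and let \(A\) and \(S\) be subsets of \(Q\) satisfying \(\varnothing\subsetneq A\subsetneq S\). Suppose there is a word \(w_{0}\in\Sigma^{*}\) such that \(A\nsubseteq S\cdot w_{0}\). Then there exists a word \(w\in\Sigma^{*}\) of length at most \(n-|A|\) satisfying either (1) \(A\nsubseteq S\cdot w\), or (2) \(|S\cdot w| < |S|\). -/

import Mathlib

/-- The action of a word `w` on a state `q`: apply the transition function letter by letter. -/
def wordAct {Q A : Type*} (δ : Q → A → Q) (q : Q) (w : List A) : Q := w.foldl δ q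

/-- The image of a set of states `S` under a word `w`. -/
def wordImage {Q A : Type*} [DecidableEq Q] (δ : Q → A → Q) (S : Finset Q) (w : List A) :
    Finset Q :=
  S.image fun q => wordAct δ q w

/-- The rank of a word `w`: the cardinality of `Q ⋅ w`. -/
def wordRank {Q A : Type*} [Fintype Q] [DecidableEq Q] (δ : Q → A → Q) (w : List A) : ℕ :=
  (wordImage δ Finset.univ w).card

/-- An automaton is synchronizing if some word has rank one. -/
def IsSynchronizing {Q A : Type*} [Fintype Q] [DecidableEq Q] (δ : Q → A → Q) : Prop :=
  ∃ w : List A, wordRank δ w = 1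

/-- The reset threshold: the length of the shortest rank-one word. -/
noncomputable def resetThreshold {Q A : Type*} [Fintype Q] [DecidableEq Q]
    (δ : Q → A → Q) : ℕ :=
  sInf {l : ℕ | ∃ w : List A, w.length = l ∧ wordRank δ w = 1}

section Lemma2Aux

open Finset

variable {Q : Type*} {B : Type*} [Fintype Q] [DecidableEq Q]

/-- The multiplicity vector of `S` under `w` : `q ↦ #{s ∈ S : s ⬝ w = q}` as a rational vector. -/
noncomputable def psiV (δ : Q → B → Q) (S : Finset Q) (w : List B) : Q → ℚ :=
  fun q => ((S.filter fun s => wordAct δ s w = q).card : ℚ)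

/-- The linear transition operator of a letter acting on multiplicity vectors. -/
noncomputable def stepL (δ : Q → B → Q) (a : B) : (Q → ℚ) →ₗ[ℚ] (Q → ℚ) where
  toFun x := fun q => ∑ p ∈ Finset.univ.filter fun p => δ p a = q, x p
  map_add' x y := by funext q; simp [Finset.sum_add_distrib]
  map_smul' c x := by funext q; simp [Finset.mul_sum]

@[simp] lemma stepL_apply (δ : Q → B → Q) (a : B) (x : Q → ℚ) (q : Q) :
    stepL δ a x q = ∑ p ∈ Finset.univ.filter fun p => δ p a = q, x p := rfl

lemma wordAct_append (δ : Q → B → Q) (s : Q) (w : List B) (a : B) :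
    wordAct δ s (w ++ [a]) = δ (wordAct δ s w) a := by
  simp [wordAct]

lemma psiV_append (δ : Q → B → Q) (S : Finset Q) (w : List B) (a : B) :
    psiV δ S (w ++ [a]) = stepL δ a (psiV δ S w) := by
  funext q
  rw [stepL_apply]
  unfold psiV
  have h1 : ((S.filter fun s => wordAct δ s (w ++ [a]) = q).card : ℚ)
      = ∑ s ∈ S, if δ (wordAct δ s w) a = q then (1:ℚ) else 0 := by
    rw [Finset.card_filter]
    push_cast
    refine Finset.sum_congr rfl ?_
    intro s _
    simp [wordAct_append]
  rw [h1]
  have h2 : ∀ p, ((S.filter fun s => wordAct δ s w = p).card : ℚ)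
      = ∑ s ∈ S, if wordAct δ s w = p then (1:ℚ) else 0 := by
    intro p
    rw [Finset.card_filter]
    push_cast
    rfl
  calc (∑ s ∈ S, if δ (wordAct δ s w) a = q then (1:ℚ) else 0)
      = ∑ s ∈ S, ∑ p ∈ Finset.univ.filter fun p => δ p a = q,
          (if wordAct δ s w = p then (1:ℚ) else 0) := by
        refine Finset.sum_congr rfl ?_
        intro s _
        rw [Finset.sum_ite_eq (Finset.univ.filter fun p => δ p a = q) (wordAct δ s w)
          (fun _ => (1:ℚ))]
        simp
    _ = ∑ p ∈ Finset.univ.filter fun p => δ p a = q,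
          ∑ s ∈ S, (if wordAct δ s w = p then (1:ℚ) else 0) := Finset.sum_comm
    _ = ∑ p ∈ Finset.univ.filter fun p => δ p a = q,
          ((S.filter fun s => wordAct δ s w = p).card : ℚ) := by
        refine Finset.sum_congr rfl ?_
        intro p _
        rw [h2]

lemma psiV_sum (δ : Q → B → Q) (S : Finset Q) (w : List B) :
    ∑ q, psiV δ S w q = (S.card : ℚ) := by
  have h := Finset.card_eq_sum_card_fiberwise
    (f := fun s => wordAct δ s w) (s := S) (t := (Finset.univ : Finset Q))
    (fun x _ => Finset.mem_univ _)
  unfold psiV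
  rw [h]
  push_cast
  rfl

lemma psiV_eq_one (δ : Q → B → Q) (S T : Finset Q) (w : List B)
    (hT : T ⊆ wordImage δ S w) (hcard : (wordImage δ S w).card = S.card)
    {t : Q} (ht : t ∈ T) : psiV δ S w t = 1 := by
  have hsum : ∑ q ∈ wordImage δ S w, (S.filter fun s => wordAct δ s w = q).card = S.card :=
    (Finset.card_eq_sum_card_fiberwise
      (f := fun s => wordAct δ s w) (s := S) (t := wordImage δ S w)
      (fun x hx => Finset.mem_image_of_mem _ hx)).symm
  have hle : ∀ q ∈ wordImage δ S w, 1 ≤ (S.filter fun s => wordAct δ s w = q).card := by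
    intro q hq
    obtain ⟨s, hs, rfl⟩ := Finset.mem_image.mp hq
    exact Finset.card_pos.mpr ⟨s, Finset.mem_filter.mpr ⟨hs, rfl⟩⟩
  have h2 : (∑ _q ∈ wordImage δ S w, 1)
      = ∑ q ∈ wordImage δ S w, (S.filter fun s => wordAct δ s w = q).card := by
    rw [hsum, Finset.sum_const, smul_eq_mul, mul_one, hcard]
  have key := (Finset.sum_eq_sum_iff_of_le hle).mp h2
  have ht' := key t (hT ht)
  unfold psiV
  rw [← ht']
  norm_num

lemma psiV_nil_one (δ : Q → B → Q) (S : Finset Q) {t : Q} (ht : t ∈ S) :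
    psiV δ S ([] : List B) t = 1 := by
  unfold psiV
  have : (S.filter fun s => wordAct δ s ([] : List B) = t) = {t} := by
    ext s
    simp only [Finset.mem_filter, Finset.mem_singleton]
    constructor
    · rintro ⟨_, hs⟩; simpa [wordAct] using hs
    · rintro rfl; exact ⟨ht, rfl⟩
  rw [this]
  simp

/-- The space of vectors vanishing on `T` with zero total sum. -/
def ZS (T : Finset Q) : Submodule ℚ (Q → ℚ) where
  carrier := {x | (∀ t ∈ T, x t = 0) ∧ ∑ q, x q = 0}
  add_mem' := by
    rintro x y ⟨hx1, hx2⟩ ⟨hy1, hy2⟩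
    refine ⟨fun t ht => ?_, ?_⟩
    · simp [Pi.add_apply, hx1 t ht, hy1 t ht]
    · simp [Pi.add_apply, Finset.sum_add_distrib, hx2, hy2]
  zero_mem' := ⟨fun t _ => rfl, by simp⟩
  smul_mem' := by
    rintro c x ⟨h1, h2⟩
    refine ⟨fun t ht => ?_, ?_⟩
    · simp [h1 t ht]
    · simp [← Finset.mul_sum, h2]

lemma mem_ZS {T : Finset Q} {x : Q → ℚ} :
    x ∈ ZS T ↔ (∀ t ∈ T, x t = 0) ∧ ∑ q, x q = 0 := Iff.rfl

lemma finrank_ZS_le (T : Finset Q) {q₀ : Q} (hq₀ : q₀ ∉ T) :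
    Module.finrank ℚ (ZS T) ≤ Fintype.card Q - T.card - 1 := by
  classical
  set R : Finset Q := Tᶜ.erase q₀ with hR
  have hq₀c : q₀ ∈ Tᶜ := Finset.mem_compl.mpr hq₀
  have hcard : R.card = Fintype.card Q - T.card - 1 := by
    rw [hR, Finset.card_erase_of_mem hq₀c, Finset.card_compl]
  let f : (ZS T : Submodule ℚ (Q → ℚ)) →ₗ[ℚ] (↥R → ℚ) :=
    (LinearMap.funLeft ℚ ℚ (fun r : R => (r : Q))).comp (ZS T).subtype
  have hker : ∀ x : ZS T, f x = 0 → x = 0 := by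
    intro x hx
    have hxR : ∀ r : R, (x : Q → ℚ) (r : Q) = 0 := by
      intro r
      have := congrFun hx r
      simpa [f, LinearMap.funLeft] using this
    have hxval : ∀ b : Q, b ≠ q₀ → (x : Q → ℚ) b = 0 := by
      intro b hb
      by_cases hbT : b ∈ T
      · exact x.2.1 b hbT
      · have hbR : b ∈ R := by
          rw [hR]; exact Finset.mem_erase.mpr ⟨hb, Finset.mem_compl.mpr hbT⟩
        exact hxR ⟨b, hbR⟩
    have hsum : ∑ p, (x : Q → ℚ) p = (x : Q → ℚ) q₀ :=
      Finset.sum_eq_single_of_mem q₀ (Finset.mem_univ _) (fun b _ hb => hxval b hb)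
    have hq0 : (x : Q → ℚ) q₀ = 0 := by
      rw [← hsum]; exact x.2.2
    apply Subtype.ext
    funext q
    by_cases hq : q = q₀
    · rw [hq]; exact hq0
    · exact hxval q hq
  have hinj : Function.Injective f := by
    rw [← LinearMap.ker_eq_bot, LinearMap.ker_eq_bot']
    intro x hx
    exact hker x hx
  have hfr := LinearMap.finrank_le_finrank_of_injective hinj
  rwa [Module.finrank_pi, Fintype.card_coe, hcard] at hfr

/-- The span of differences of multiplicity vectors of words of length at most `k`. -/
noncomputable def Uspan (δ : Q → B → Q) (S : Finset Q) (k : ℕ) : Submodule ℚ (Q → ℚ) :=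
  Submodule.span ℚ {x | ∃ w : List B, w.length ≤ k ∧ x = psiV δ S w - psiV δ S []}

lemma Uspan_mono (δ : Q → B → Q) (S : Finset Q) {k l : ℕ} (h : k ≤ l) :
    Uspan δ S k ≤ Uspan δ S l := by
  apply Submodule.span_mono
  rintro x ⟨w, hw, hx⟩
  exact ⟨w, hw.trans h, hx⟩

lemma mem_Uspan (δ : Q → B → Q) (S : Finset Q) {k : ℕ} (w : List B) (hw : w.length ≤ k) :
    psiV δ S w - psiV δ S [] ∈ Uspan δ S k :=
  Submodule.subset_span ⟨w, hw, rfl⟩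

lemma Uspan_stab (δ : Q → B → Q) (S : Finset Q) (k : ℕ)
    (h : Uspan δ S (k+1) ≤ Uspan δ S k) :
    ∀ j, Uspan δ S j ≤ Uspan δ S k := by
  have main : ∀ j, Uspan δ S (k + j) ≤ Uspan δ S k := by
    intro j
    induction j with
    | zero => exact le_rfl
    | succ j ih =>
      rw [Uspan, Submodule.span_le]
      rintro x ⟨w, hw, rfl⟩
      by_cases hlen : w.length ≤ k + j
      · exact ih (mem_Uspan δ S w hlen)
      · have hne : w ≠ [] := by
          intro h0
          rw [h0] at hlen
          exact hlen (by simp)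
        set a := w.getLast hne with ha
        set v := w.dropLast with hv
        have hw' : v ++ [a] = w := by
          rw [hv, ha]; exact List.dropLast_append_getLast hne
        have hvlen : v.length ≤ k + j := by
          have h1 : v.length + 1 = w.length := by
            rw [← hw']; simp
          omega
        have hmem : psiV δ S v - psiV δ S [] ∈ Uspan δ S k := ih (mem_Uspan δ S v hvlen)
        have hmap : Submodule.map (stepL δ a) (Uspan δ S k) ≤ Uspan δ S k := by
          rw [Uspan, Submodule.map_span, Submodule.span_le]
          rintro y ⟨x', ⟨u, hu, rfl⟩, rfl⟩
          have e1 : stepL δ a (psiV δ S u - psiV δ S []) =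
              (psiV δ S (u ++ [a]) - psiV δ S []) -
              (psiV δ S ([] ++ [a]) - psiV δ S []) := by
            rw [map_sub, ← psiV_append, ← psiV_append]
            abel
          rw [SetLike.mem_coe, e1]
          refine h (Submodule.sub_mem _ ?_ ?_)
          · exact mem_Uspan δ S (u ++ [a]) (by simp; omega)
          · exact mem_Uspan δ S ([] ++ [a]) (by simp)
        have hst : stepL δ a (psiV δ S v - psiV δ S []) ∈ Uspan δ S k :=
          hmap (Submodule.mem_map_of_mem hmem)
        have e2 : psiV δ S w - psiV δ S [] =
            stepL δ a (psiV δ S v - psiV δ S []) +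
            (psiV δ S ([] ++ [a]) - psiV δ S []) := by
          rw [map_sub, ← psiV_append, ← psiV_append, hw']
          abel
        rw [e2]
        refine Submodule.add_mem _ hst ?_
        exact h (mem_Uspan δ S ([] ++ [a]) (by simp))
  intro j
  by_cases hj : j ≤ k
  · exact Uspan_mono δ S hj
  · have := main (j - k)
    rwa [Nat.add_sub_cancel' (le_of_not_ge hj)] at this

end Lemma2Aux

/-- Lemma 2 of Szykuła's paper: if `∅ ⊊ A ⊊ S` and some word maps `S` off `A`, then there is a
word of length at most `n - |A|` that either maps `S` off `A` or strictly decreases `|S|`. -/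
theorem short_word_escaping_or_decreasing
    {Q A : Type*} [Fintype Q] [DecidableEq Q] (δ : Q → A → Q)
    (S T : Finset Q) (hne : T.Nonempty) (hsub : T ⊂ S)
    (h : ∃ w₀ : List A, ¬ T ⊆ wordImage δ S w₀) :
    ∃ w : List A, w.length ≤ Fintype.card Q - T.card ∧
      (¬ T ⊆ wordImage δ S w ∨ (wordImage δ S w).card < S.card) := by
  classical
  by_contra hcon
  push_neg at hcon
  obtain ⟨w₀, hw₀⟩ := h
  set d := Fintype.card Q - T.card with hd
  have hTS : T ⊆ S := hsub.subset
  have hTcard : T.card < S.card := Finset.card_lt_card hsub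
  have hSn : S.card ≤ Fintype.card Q := Finset.card_le_univ S
  have hd1 : 1 ≤ d := by omega
  have hgood : ∀ w : List A, w.length ≤ d →
      T ⊆ wordImage δ S w ∧ (wordImage δ S w).card = S.card := by
    intro w hw
    obtain ⟨h1, h2⟩ := hcon w hw
    refine ⟨h1, le_antisymm ?_ h2⟩
    unfold wordImage
    exact Finset.card_image_le
  obtain ⟨q₀, hq₀S, hq₀T⟩ := Finset.exists_of_ssubset hsub
  have hUZ : Uspan δ S d ≤ ZS T := by
    rw [Uspan, Submodule.span_le]
    rintro x ⟨w, hw, rfl⟩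
    obtain ⟨hsub', hcard'⟩ := hgood w hw
    rw [SetLike.mem_coe, mem_ZS]
    constructor
    · intro t ht
      have h1 : psiV δ S w t = 1 := psiV_eq_one δ S T w hsub' hcard' ht
      have h2 : psiV δ S ([] : List A) t = 1 := psiV_nil_one δ S (hTS ht)
      rw [Pi.sub_apply, h1, h2]
      ring
    · simp only [Pi.sub_apply]
      rw [Finset.sum_sub_distrib, psiV_sum, psiV_sum]
      ring
  have hstab : ∃ k, k < d ∧ Uspan δ S (k+1) ≤ Uspan δ S k := by
    by_contra hno
    push_neg at hno
    have hstrict : ∀ k, k < d → Uspan δ S k < Uspan δ S (k+1) := by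
      intro k hk
      exact lt_of_le_not_ge (Uspan_mono δ S (Nat.le_succ k)) (hno k hk)
    have hrank : ∀ k, k ≤ d → k ≤ Module.finrank ℚ (Uspan δ S k) := by
      intro k
      induction k with
      | zero => intro _; exact Nat.zero_le _
      | succ k ih =>
        intro hk
        have h1 := ih (by omega)
        have h2 := Submodule.finrank_lt_finrank_of_lt (hstrict k (by omega))
        omega
    have hZ := finrank_ZS_le T hq₀T
    have hle : Module.finrank ℚ (Uspan δ S d) ≤ Module.finrank ℚ (ZS T) :=
      Submodule.finrank_mono hUZ
    have hdr := hrank d le_rfl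
    omega
  obtain ⟨k, hk, hkle⟩ := hstab
  have hall := Uspan_stab δ S k hkle
  have hx : psiV δ S w₀ - psiV δ S [] ∈ ZS T := by
    apply hUZ
    apply Uspan_mono δ S (by omega : k ≤ d)
    exact hall w₀.length (mem_Uspan δ S w₀ le_rfl)
  obtain ⟨t, htT, htI⟩ := Finset.not_subset.mp hw₀
  have h0 : psiV δ S w₀ t = 0 := by
    unfold psiV
    have hempty : (S.filter fun s => wordAct δ s w₀ = t) = ∅ := by
      rw [Finset.filter_eq_empty_iff]
      intro s hs he
      exact htI (Finset.mem_image.mpr ⟨s, hs, he⟩)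
    rw [hempty]
    simp
  have h1 : psiV δ S ([] : List A) t = 1 := psiV_nil_one δ S (hTS htT)
  have hzero := (mem_ZS.mp hx).1 t htT
  rw [Pi.sub_apply, h0, h1] at hzero
  norm_num at hzero
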